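/- (Euclid I.16, exterior angle inequality, corrected using Pasch) Let A, B, C be noncollinear points in the Euclidean plane and let D be a point with C strictly between B and D. Then the exterior angle ∠ A C D is strictly greater than the interior and opposite angle ∠ B A C, and also strictly greater than ∠ A B C. -/

import Mathlib

open EuclideanGeometry

theorem euclid_I_16 (A B C D : EuclideanSpace ℝ (Fin 2))
    (hncol : ¬ Collinear ℝ ({A, B, C} : Set (EuclideanSpace ℝ (Fin 2))))
    (hD : Sbtw ℝ B C D) :
    ∠ B A C < ∠ A C D ∧ ∠ A B C < ∠ A C D := by
  have hne1 : B ≠ A := by rintro rfl; exact hncol (by simpa using collinear_pair ℝ B C)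
  have hne2 : C ≠ A := by rintro rfl; exact hncol (by simpa [Set.pair_comm] using collinear_pair ℝ C B)
  have hsum := EuclideanGeometry.angle_add_angle_add_angle_eq_pi C hne1
  have hpi : ∠ B C D = Real.pi := hD.angle₁₂₃_eq_pi
  have hext := EuclideanGeometry.angle_add_angle_eq_pi_of_angle_eq_pi A hpi
  have h1 : ∠ B A C > 0 := by
    have := EuclideanGeometry.angle_pos_of_not_collinear (p₁ := B) (p₂ := A) (p₃ := C) ?_
    · exact this
    · intro h; apply hncol; rw [Set.insert_comm]; exact h
  have h2 : ∠ A B C > 0 := EuclideanGeometry.angle_pos_of_not_collinear (by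
    intro h; apply hncol
    have : ({A, B, C} : Set (EuclideanSpace ℝ (Fin 2))) = {A, B, C} := rfl
    exact h)
  have hc2 : ∠ A C B = ∠ B C A := EuclideanGeometry.angle_comm A C B
  have hc1 : ∠ C A B = ∠ B A C := EuclideanGeometry.angle_comm C A B
  constructor <;> [linarith [hsum, hext, h2]; linarith [hsum, hext, h1]]
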